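/- Let G be a finite group generated by two subnormal supersoluble subgroups A and B. If the derived subgroup G' of G is nilpotent, then G is supersoluble. -/

import Mathlib

/-- A subgroup `H` of `G` is subnormal if there is a chain
`H = c 0 ≤ c 1 ≤ ... ≤ c n = G` with each term normal in the next. -/
def Subgroup.IsSubnormalChain {G : Type*} [Group G] (H : Subgroup G) : Prop :=
  ∃ (n : ℕ) (c : Fin (n + 1) → Subgroup G),
    c 0 = H ∧ c (Fin.last n) = ⊤ ∧
    ∀ i : Fin n, c i.castSucc ≤ c i.succ ∧
      ((c i.castSucc).subgroupOf (c i.succ)).Normal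

/-- A group is supersoluble if it has a normal series (all terms normal in `G`)
with cyclic factors; the factor `c (i+1) / c i` being cyclic is expressed as
`c (i+1)` being generated by `c i` together with a single element. -/
def IsSupersolvable (G : Type*) [Group G] : Prop :=
  ∃ (n : ℕ) (c : Fin (n + 1) → Subgroup G),
    c 0 = ⊥ ∧ c (Fin.last n) = ⊤ ∧
    (∀ i, (c i).Normal) ∧
    ∀ i : Fin n, c i.castSucc ≤ c i.succ ∧
      ∃ g ∈ c i.succ, c i.succ ≤ c i.castSucc ⊔ Subgroup.zpowers g

/-- The Fitting subgroup: the join of all normal nilpotent subgroups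
(in a finite group, the largest normal nilpotent subgroup). -/
def fittingSubgroup (G : Type*) [Group G] : Subgroup G :=
  sSup {N : Subgroup G | N.Normal ∧ Group.IsNilpotent N}

instance fittingSubgroup_normal (G : Type*) [Group G] : (fittingSubgroup G).Normal := by
  constructor
  intro x hx g
  rw [fittingSubgroup, sSup_eq_iSup'] at hx ⊢
  refine Subgroup.iSup_induction
    (C := fun y => g * y * g⁻¹ ∈
      ⨆ (N : {N : Subgroup G // N.Normal ∧ Group.IsNilpotent N}), (N : Subgroup G))
    _ hx (fun N y hy => ?_) (by simpa using Subgroup.one_mem _) (fun y z hy hz => ?_)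
  · exact Subgroup.mem_iSup_of_mem N (N.2.1.conj_mem y hy g)
  · simpa [mul_assoc] using Subgroup.mul_mem _ hy hz

/-- `O_p(G)`: the join of all normal `p`-subgroups
(in a finite group, the largest normal `p`-subgroup). -/
def pCore (p : ℕ) (G : Type*) [Group G] : Subgroup G :=
  sSup {N : Subgroup G | N.Normal ∧ IsPGroup p N}

instance pCore_normal (p : ℕ) (G : Type*) [Group G] : (pCore p G).Normal := by
  constructor
  intro x hx g
  rw [pCore, sSup_eq_iSup'] at hx ⊢
  refine Subgroup.iSup_induction
    (C := fun y => g * y * g⁻¹ ∈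
      ⨆ (N : {N : Subgroup G // N.Normal ∧ IsPGroup p N}), (N : Subgroup G))
    _ hx (fun N y hy => ?_) (by simpa using Subgroup.one_mem _) (fun y z hy hz => ?_)
  · exact Subgroup.mem_iSup_of_mem N (N.2.1.conj_mem y hy g)
  · simpa [mul_assoc] using Subgroup.mul_mem _ hy hz

/-- `G` has a Sylow tower of supersoluble type: a normal series `⊥ = c 0 ≤ ... ≤ c n = ⊤`
(all terms normal in `G`) together with strictly decreasing primes `p 0 > p 1 > ... `
exhausting the primes dividing `|G|`, such that each factor `c (i+1) / c i` is a
Sylow `p i`-subgroup of `G / c i` (i.e. has order the full `p i`-part of `|G|`). -/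
def HasSupersolubleSylowTower (G : Type*) [Group G] : Prop :=
  ∃ (n : ℕ) (c : Fin (n + 1) → Subgroup G) (p : Fin n → ℕ),
    c 0 = ⊥ ∧ c (Fin.last n) = ⊤ ∧
    (∀ i, (c i).Normal) ∧
    (∀ i : Fin n, c i.castSucc ≤ c i.succ) ∧
    (∀ i, (p i).Prime) ∧
    (∀ i j : Fin n, i < j → p j < p i) ∧
    (∀ q : ℕ, q.Prime → q ∣ Nat.card G → ∃ i, p i = q) ∧
    (∀ i : Fin n,
      Nat.card (c i.succ) = Nat.card (c i.castSucc) * p i ^ (Nat.card G).factorization (p i))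

open scoped commutatorElement

namespace StmtAux

open Subgroup

variable {G : Type*} [Group G]

/-- ℕ-indexed version of a subnormal chain. -/
lemma subnormal_nat {H : Subgroup G} (h : H.IsSubnormalChain) :
    ∃ (d : ℕ) (cc : ℕ → Subgroup G), cc 0 = H ∧ cc d = ⊤ ∧
      (∀ i, cc i ≤ cc (i + 1)) ∧
      (∀ i, ∀ y ∈ cc (i + 1), ∀ x ∈ cc i, y * x * y⁻¹ ∈ cc i) := by
  obtain ⟨n, c, h0, hlast, hstep⟩ := h
  set cc : ℕ → Subgroup G := fun i => if hi : i ≤ n then c ⟨i, Nat.lt_succ_of_le hi⟩ else ⊤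
    with hcc
  have hccle : ∀ i (hi : i ≤ n), cc i = c ⟨i, Nat.lt_succ_of_le hi⟩ := by
    intro i hi; simp [hcc, hi]
  have hcctop : ∀ i, n ≤ i → cc i = ⊤ := by
    intro i hi
    by_cases hi' : i ≤ n
    · have hin : i = n := Nat.le_antisymm hi' hi
      subst hin
      rw [hccle i le_rfl]
      exact hlast
    · simp [hcc, hi']
  refine ⟨n, cc, by rw [hccle 0 (Nat.zero_le n)]; convert h0; simp, hcctop n le_rfl, ?_, ?_⟩
  · intro i
    by_cases hi : i + 1 ≤ n
    · have hi' : i ≤ n := Nat.le_of_succ_le hi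
      rw [hccle i hi', hccle (i+1) hi]
      exact (hstep ⟨i, hi⟩).1
    · rw [hcctop (i+1) (le_of_lt (Nat.not_le.mp hi))]; exact le_top
  · intro i y hy x hx
    by_cases hi : i + 1 ≤ n
    · have hi' : i ≤ n := Nat.le_of_succ_le hi
      rw [hccle i hi'] at hx ⊢
      rw [hccle (i+1) hi] at hy
      have hle := (hstep ⟨i, hi⟩).1
      have hnor := (hstep ⟨i, hi⟩).2
      have := (normal_subgroupOf_iff hle).mp hnor x y
      exact this hx hy
    · by_cases hi' : i ≤ n
      · -- i = n, cc i = ⊤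
        have : i = n := Nat.le_antisymm hi' (by omega)
        subst this
        rw [hcctop i le_rfl] at hx ⊢
        exact mem_top _
      · rw [hcctop i (by omega)] at hx ⊢
        exact mem_top _

end StmtAux

section Part2
open Subgroup
namespace StmtAux

variable {G : Type*} [Group G]

/-- If `h` acts as `v ↦ v^k` on one nontrivial element of the minimal normal
subgroup `N`, it acts as `v ↦ v^k` on all of `N`. -/
lemma scalar_extend {N : Subgroup G} (hN : N.Normal)
    (hmin : ∀ K : Subgroup G, K.Normal → K ≤ N → K ≠ ⊥ → K = N)
    (hcent : ∀ c ∈ commutator G, ∀ v ∈ N, c * v = v * c)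
    (hab : ∀ v ∈ N, ∀ w ∈ N, v * w = w * v)
    {h v : G} (hv : v ∈ N) (hv1 : v ≠ 1) {k : ℤ}
    (hconj : h * v * h⁻¹ = v ^ k) :
    ∀ w ∈ N, h * w * h⁻¹ = w ^ k := by
  classical
  set W : Subgroup G :=
    { carrier := {w | w ∈ N ∧ h * w * h⁻¹ = w ^ k}
      one_mem' := ⟨N.one_mem, by simp⟩
      mul_mem' := by
        rintro a b ⟨haN, ha⟩ ⟨hbN, hb⟩
        refine ⟨N.mul_mem haN hbN, ?_⟩
        have hcomm : Commute a b := hab a haN b hbN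
        calc h * (a * b) * h⁻¹ = (h * a * h⁻¹) * (h * b * h⁻¹) := by group
          _ = a ^ k * b ^ k := by rw [ha, hb]
          _ = (a * b) ^ k := (hcomm.mul_zpow k).symm
      inv_mem' := by
        rintro a ⟨haN, ha⟩
        refine ⟨N.inv_mem haN, ?_⟩
        calc h * a⁻¹ * h⁻¹ = (h * a * h⁻¹)⁻¹ := by group
          _ = (a ^ k)⁻¹ := by rw [ha]
          _ = (a⁻¹) ^ k := (inv_zpow a k).symm
      } with hW
  have hWmem : ∀ w, w ∈ W ↔ w ∈ N ∧ h * w * h⁻¹ = w ^ k := fun w => Iff.rfl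
  have hconj' : ∀ g : G, ∀ w ∈ W, g * w * g⁻¹ ∈ W := by
    intro g w hw
    rw [hWmem] at hw ⊢
    obtain ⟨hwN, hwk⟩ := hw
    refine ⟨hN.conj_mem w hwN g, ?_⟩
    have hc : (h⁻¹ * g⁻¹ * h * g) ∈ commutator G := by
      rw [_root_.commutator_def]
      have : (h⁻¹ * g⁻¹ * h * g) = ⁅h⁻¹, g⁻¹⁆ := by group
      rw [this]
      exact commutator_mem_commutator (mem_top _) (mem_top _)
    have key : (g⁻¹ * h * g) * w * (g⁻¹ * h * g)⁻¹ = w ^ k := by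
      have hcw := hcent _ hc w hwN
      calc (g⁻¹ * h * g) * w * (g⁻¹ * h * g)⁻¹
          = h * ((h⁻¹ * g⁻¹ * h * g) * w * (h⁻¹ * g⁻¹ * h * g)⁻¹) * h⁻¹ := by group
        _ = h * w * h⁻¹ := by rw [show (h⁻¹ * g⁻¹ * h * g) * w * (h⁻¹ * g⁻¹ * h * g)⁻¹ = w from
              by rw [hcw]; group]
        _ = w ^ k := hwk
    calc h * (g * w * g⁻¹) * h⁻¹
        = g * ((g⁻¹ * h * g) * w * (g⁻¹ * h * g)⁻¹) * g⁻¹ := by group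
      _ = g * w ^ k * g⁻¹ := by rw [key]
      _ = (g * w * g⁻¹) ^ k := by rw [conj_zpow]
  have hWnormal : W.Normal := ⟨fun w hw g => hconj' g w hw⟩
  have hWle : W ≤ N := fun w hw => ((hWmem w).mp hw).1
  have hWne : W ≠ ⊥ := by
    intro hbot
    have : v ∈ W := (hWmem v).mpr ⟨hv, hconj⟩
    rw [hbot, Subgroup.mem_bot] at this
    exact hv1 this
  have := hmin W hWnormal hWle hWne
  intro w hw
  rw [← this] at hw
  exact ((hWmem w).mp hw).2

end StmtAux
end Part2

section Part3
open Subgroup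
namespace StmtAux

variable {G : Type*} [Group G]

/-- If `H` is subnormal (witnessed by an ℕ-chain) and `N ⊓ H = ⊥` for the minimal
normal subgroup `N`, then `H` centralizes `N`. -/
lemma centralizes_of_disjoint {N H : Subgroup G} (hN : N.Normal) (hNbot : N ≠ ⊥)
    (hmin : ∀ K : Subgroup G, K.Normal → K ≤ N → K ≠ ⊥ → K = N)
    (hcent : ∀ c ∈ commutator G, ∀ v ∈ N, c * v = v * c)
    (hab : ∀ v ∈ N, ∀ w ∈ N, v * w = w * v)
    {d : ℕ} {cc : ℕ → Subgroup G} (hc0 : cc 0 = H) (hcd : cc d = ⊤)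
    (hle : ∀ i, cc i ≤ cc (i + 1))
    (hnor : ∀ i, ∀ y ∈ cc (i + 1), ∀ x ∈ cc i, y * x * y⁻¹ ∈ cc i)
    (hdisj : N ⊓ H = ⊥) :
    ∀ h ∈ H, ∀ v ∈ N, h * v * h⁻¹ = v := by
  -- monotone chain
  have hmono : ∀ i j, i ≤ j → cc i ≤ cc j := by
    intro i j hij
    induction j with
    | zero => rw [Nat.le_zero.mp hij]
    | succ j ihj =>
      rcases Nat.le_succ_iff.mp hij with h' | h'
      · exact (ihj h').trans (hle j)
      · rw [h']
  -- iterated commutator chain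
  set T : ℕ → Subgroup G := fun k => Nat.rec N (fun _ Tk => ⁅Tk, H⁆) k with hT
  have hT0 : T 0 = N := rfl
  have hTsucc : ∀ k, T (k + 1) = ⁅T k, H⁆ := fun k => rfl
  have hTle : ∀ k, k ≤ d → T k ≤ N ⊓ cc (d - k) := by
    intro k
    induction k with
    | zero => intro _; rw [hT0, Nat.sub_zero, hcd]; exact le_inf le_rfl le_top
    | succ k ih =>
      intro hk
      have hk' : k ≤ d := Nat.le_of_succ_le hk
      have ihk := ih hk'
      rw [hTsucc]
      rw [commutator_le]
      intro x hx h' hh'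
      have hx' := ihk hx
      rw [Subgroup.mem_inf] at hx'
      obtain ⟨hxN, hxc⟩ := hx'
      have hsub : d - k = (d - (k + 1)) + 1 := by omega
      rw [hsub] at hxc
      rw [Subgroup.mem_inf]
      constructor
      · -- ⁅x, h'⁆ ∈ N
        have : ⁅x, h'⁆ = x * (h' * x⁻¹ * h'⁻¹) := by group
        rw [this]
        exact N.mul_mem hxN (hN.conj_mem _ (N.inv_mem hxN) h')
      · -- ⁅x, h'⁆ ∈ cc (d - (k+1))
        have hh'j : h' ∈ cc (d - (k + 1)) := by
          have : H ≤ cc (d - (k + 1)) := hc0 ▸ hmono 0 _ (Nat.zero_le _)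
          exact this hh'
        have h1 : x * h' * x⁻¹ ∈ cc (d - (k + 1)) := hnor _ x hxc h' hh'j
        have : ⁅x, h'⁆ = (x * h' * x⁻¹) * h'⁻¹ := by group
        rw [this]
        exact mul_mem h1 (inv_mem hh'j)
  have hTd : T d ≤ ⊥ := by
    have := hTle d le_rfl
    rw [Nat.sub_self, hc0, hdisj] at this
    exact this
  -- now fix h ∈ H
  intro h hh v hvN
  set φ : G → G := fun x => x⁻¹ * (h * x * h⁻¹) with hφ
  have hφN : ∀ x ∈ N, φ x ∈ N := fun x hx =>
    N.mul_mem (N.inv_mem hx) (hN.conj_mem x hx h)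
  have hφT : ∀ k, ∀ x ∈ T k, φ x ∈ T (k + 1) := by
    intro k x hx
    rw [hTsucc]
    have : φ x = ⁅x⁻¹, h⁆ := by simp only [hφ]; group
    rw [this]
    exact commutator_mem_commutator (inv_mem hx) hh
  have hTN : ∀ k, k ≤ d → T k ≤ N := fun k hk => (hTle k hk).trans inf_le_left
  have hiter : ∀ k, k ≤ d → ∀ x ∈ N, x ∈ T 0 → φ^[k] x ∈ T k := by
    intro k
    induction k with
    | zero => intro _ x _ hx; simpa using hx
    | succ k ih =>
      intro hk x hxN hx
      rw [Function.iterate_succ_apply']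
      exact hφT k _ (ih (Nat.le_of_succ_le hk) x hxN hx)
  have hφd : ∀ x ∈ N, φ^[d] x = 1 := by
    intro x hx
    have := hTd (hiter d le_rfl x hx (hT0 ▸ hx))
    rwa [Subgroup.mem_bot] at this
  -- either some nontrivial element is centralized, or φ is "injective"
  by_cases hfix : ∃ x ∈ N, x ≠ 1 ∧ φ x = 1
  · obtain ⟨x, hxN, hx1, hxfix⟩ := hfix
    have hxc : h * x * h⁻¹ = x ^ (1 : ℤ) := by
      have : h * x * h⁻¹ = x * (φ x) := by simp only [hφ]; group
      rw [this, hxfix, mul_one, zpow_one]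
    have := scalar_extend hN hmin hcent hab hxN hx1 hxc v hvN
    rwa [zpow_one] at this
  · push_neg at hfix
    exfalso
    have hinj : ∀ x ∈ N, φ x = 1 → x = 1 := by
      intro x hx hfx
      by_contra hx1
      exact (hfix x hx hx1) hfx
    have : ∀ k, ∀ x ∈ N, φ^[k] x = 1 → x = 1 := by
      intro k
      induction k with
      | zero => intro x _ hx; simpa using hx
      | succ k ih =>
        intro x hx hitx
        rw [Function.iterate_succ_apply] at hitx
        have hφx : φ x = 1 := ih (φ x) (hφN x hx) hitx
        exact hinj x hx hφx
    have hNbot' : N = ⊥ := by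
      rw [eq_bot_iff]
      intro x hx
      rw [Subgroup.mem_bot]
      exact this d x hx (hφd x hx)
    exact hNbot hNbot'

end StmtAux
end Part3

section Part4
open Subgroup
namespace StmtAux

variable {G : Type*} [Group G]

/-- If `H` is supersolvable and `M ≠ ⊥` is an abelian-ish `H`-invariant subgroup
contained in `H`, then `M` contains a nontrivial element `v` such that every
element of `H` conjugates `v` to a power of `v`. -/
lemma exists_scalar_elem {H : Subgroup G} (hHs : IsSupersolvable ↥H)
    {M : Subgroup G} (hM : M ≤ H) (hMne : M ≠ ⊥)
    (hMnorm : ∀ h ∈ H, ∀ x ∈ M, h * x * h⁻¹ ∈ M) :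
    ∃ v : G, v ∈ M ∧ v ≠ 1 ∧ ∀ h ∈ H, ∃ k : ℤ, h * v * h⁻¹ = v ^ k := by
  classical
  obtain ⟨n, c, h0, hlast, hnorm, hstep⟩ := hHs
  -- ℕ-reindexing of the series
  set cc : ℕ → Subgroup ↥H := fun i => if hi : i ≤ n then c ⟨i, Nat.lt_succ_of_le hi⟩ else ⊤
    with hccdef
  have hccle : ∀ i (hi : i ≤ n), cc i = c ⟨i, Nat.lt_succ_of_le hi⟩ := by
    intro i hi; simp [hccdef, hi]
  have hcc0 : cc 0 = ⊥ := by rw [hccle 0 (Nat.zero_le n)]; convert h0; simp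
  have hcctop : ∀ i, n ≤ i → cc i = ⊤ := by
    intro i hi
    by_cases hi' : i ≤ n
    · have hin : i = n := Nat.le_antisymm hi' hi
      subst hin
      rw [hccle i le_rfl]; exact hlast
    · simp [hccdef, hi']
  have hccnorm : ∀ i, (cc i).Normal := by
    intro i
    by_cases hi : i ≤ n
    · rw [hccle i hi]; exact hnorm _
    · simp only [hccdef]; rw [dif_neg hi]; infer_instance
  have hccstep : ∀ i, cc i ≤ cc (i + 1) ∧
      ∃ g ∈ cc (i + 1), cc (i + 1) ≤ cc i ⊔ zpowers g := by
    intro i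
    by_cases hi : i + 1 ≤ n
    · have hi' : i ≤ n := Nat.le_of_succ_le hi
      rw [hccle i hi', hccle (i+1) hi]
      exact hstep ⟨i, hi⟩
    · constructor
      · rw [hcctop (i+1) (by omega)]; exact le_top
      · refine ⟨1, one_mem _, ?_⟩
        by_cases hi' : i ≤ n
        · have : i = n := by omega
          subst this
          rw [hcctop i le_rfl, hcctop (i+1) (by omega)]
          exact le_sup_left
        · rw [hcctop i (by omega), hcctop (i+1) (by omega)]
          exact le_sup_left
  -- M inside H
  set M' : Subgroup ↥H := M.subgroupOf H with hM'def
  have hM'mem : ∀ x : ↥H, x ∈ M' ↔ (x : G) ∈ M := fun x => mem_subgroupOf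
  have hM'norm : ∀ (h : ↥H), ∀ x ∈ M', h * x * h⁻¹ ∈ M' := by
    intro h x hx
    rw [hM'mem] at hx ⊢
    exact hMnorm h h.2 x hx
  have hM'ne : M' ≠ ⊥ := by
    intro hbot
    apply hMne
    rw [eq_bot_iff]
    intro x hx
    have : (⟨x, hM hx⟩ : ↥H) ∈ M' := (hM'mem _).mpr hx
    rw [hbot, Subgroup.mem_bot] at this
    rw [Subgroup.mem_bot]
    exact congrArg Subtype.val this
  -- least index where M' meets the series
  set P : ℕ → Prop := fun i => M' ⊓ cc i ≠ ⊥ with hPdef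
  haveI : DecidablePred P := Classical.decPred P
  have hPn : P n := by
    simp only [hPdef]
    rw [hcctop n le_rfl, inf_top_eq]
    exact hM'ne
  have hex : ∃ i, P i := ⟨n, hPn⟩
  set i₀ := Nat.find hex with hi₀def
  have hi₀P : P i₀ := Nat.find_spec hex
  have hi₀ne : i₀ ≠ 0 := by
    intro h0'
    apply hi₀P
    rw [h0'] at hi₀P ⊢
    rw [hcc0, inf_bot_eq]
  obtain ⟨j, hj⟩ : ∃ j, i₀ = j + 1 := ⟨i₀ - 1, by omega⟩
  have hPj : ¬ P j := Nat.find_min hex (by omega)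
  have hMj : M' ⊓ cc j = ⊥ := by
    by_contra hne
    exact hPj hne
  set Y : Subgroup ↥H := M' ⊓ cc (j + 1) with hYdef
  have hYne : Y ≠ ⊥ := by rw [hj] at hi₀P; exact hi₀P
  obtain ⟨g, hg, hgen⟩ := (hccstep j).2
  set Q : Subgroup ↥H := cc j ⊔ zpowers g with hQdef
  haveI hccjN : (cc j).Normal := hccnorm j
  set K' : Subgroup ↥Q := (cc j).subgroupOf Q with hK'def
  haveI hK'N : K'.Normal := (hccnorm j).subgroupOf Q
  have hYQ : Y ≤ Q := inf_le_right.trans hgen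
  set ψ : ↥Y →* ↥Q ⧸ K' := (QuotientGroup.mk' K').comp (inclusion hYQ) with hψdef
  have hinj : Function.Injective ψ := by
    rw [injective_iff_map_eq_one]
    intro a ha
    have h1 : inclusion hYQ a ∈ K' := (QuotientGroup.eq_one_iff _).mp ha
    have h2 : (a : ↥H) ∈ cc j := h1
    have h3 : (a : ↥H) ∈ M' := (show Y ≤ M' from inf_le_left) a.2
    have : (a : ↥H) ∈ M' ⊓ cc j := ⟨h3, h2⟩
    rw [hMj, Subgroup.mem_bot] at this
    exact Subtype.ext this
  have gQmem : g ∈ Q := mem_sup_right (mem_zpowers g)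
  set gQ : ↥Q := ⟨g, gQmem⟩ with hgQdef
  have hcyc : IsCyclic (↥Q ⧸ K') := by
    constructor
    refine ⟨QuotientGroup.mk' K' gQ, ?_⟩
    intro x
    obtain ⟨q, rfl⟩ := QuotientGroup.mk'_surjective K' x
    have hq : (q : ↥H) ∈ (zpowers g ⊔ cc j : Subgroup ↥H) := by
      rw [sup_comm]; exact q.2
    rw [← SetLike.mem_coe, Subgroup.mul_normal] at hq
    obtain ⟨a, ha, b, hb, hab⟩ := hq
    obtain ⟨kexp, hk⟩ := mem_zpowers_iff.mp ha
    set b' : ↥Q := ⟨b, mem_sup_left hb⟩ with hb'def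
    have hqeq : q = gQ ^ kexp * b' := by
      apply Subtype.ext
      have hcoe : ((gQ ^ kexp * b' : ↥Q) : ↥H) = g ^ kexp * b := by push_cast; rfl
      rw [hcoe, hk]
      exact hab.symm
    rw [hqeq, map_mul, map_zpow]
    have hb'1 : QuotientGroup.mk' K' b' = 1 :=
      (QuotientGroup.eq_one_iff b').mpr (show (b : ↥H) ∈ cc j from hb)
    rw [hb'1, mul_one]
    exact ⟨kexp, rfl⟩
  haveI := hcyc
  haveI hYcyc : IsCyclic ↥Y :=
    isCyclic_of_surjective (MonoidHom.ofInjective hinj).symm (MulEquiv.surjective _)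
  obtain ⟨v₀, hv₀⟩ := IsCyclic.exists_generator (α := ↥Y)
  refine ⟨((v₀ : ↥H) : G), ?_, ?_, ?_⟩
  · exact (hM'mem _).mp ((show Y ≤ M' from inf_le_left) v₀.2)
  · intro hv1
    apply hYne
    have hv₀1 : (v₀ : ↥H) = 1 := Subtype.ext hv1
    rw [eq_bot_iff]
    intro y hy
    obtain ⟨k, hk⟩ := mem_zpowers_iff.mp (hv₀ ⟨y, hy⟩)
    have : y = (v₀ : ↥H) ^ k := by
      have := congrArg (Subtype.val) hk
      simpa using this.symm
    rw [Subgroup.mem_bot, this, hv₀1, one_zpow]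
  · intro h hh
    set hH : ↥H := ⟨h, hh⟩ with hhHdef
    have hyY : hH * (v₀ : ↥H) * hH⁻¹ ∈ Y := by
      refine ⟨hM'norm hH _ ((show Y ≤ M' from inf_le_left) v₀.2), ?_⟩
      exact (hccnorm (j+1)).conj_mem _ ((show Y ≤ cc (j+1) from inf_le_right) v₀.2) hH
    obtain ⟨k, hk⟩ := mem_zpowers_iff.mp (hv₀ ⟨_, hyY⟩)
    refine ⟨k, ?_⟩
    have := congrArg (fun z : ↥Y => ((z : ↥H) : G)) hk
    simpa using this.symm
end StmtAux
end Part4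

section Part5
open Subgroup
namespace StmtAux

lemma isSubnormal_map {G Q : Type*} [Group G] [Group Q] {H : Subgroup G}
    (h : H.IsSubnormalChain) (π : G →* Q) (hπ : Function.Surjective π) :
    (H.map π).IsSubnormalChain := by
  obtain ⟨n, c, h0, hl, hs⟩ := h
  refine ⟨n, fun i => (c i).map π, by simp only [h0], by simp only [hl]; rw [map_top_of_surjective _ hπ],
    fun i => ?_⟩
  refine ⟨map_mono (hs i).1, ?_⟩
  rw [normal_subgroupOf_iff (map_mono (hs i).1)]
  intro x y hx hy
  obtain ⟨a, ha, rfl⟩ := hx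
  obtain ⟨b, hb, rfl⟩ := hy
  have := (normal_subgroupOf_iff (hs i).1).mp (hs i).2 a b ha hb
  exact ⟨b * a * b⁻¹, this, by simp [map_mul]⟩

lemma isSupersolvable_of_surjective {G Q : Type*} [Group G] [Group Q] (π : G →* Q)
    (hπ : Function.Surjective π) (h : IsSupersolvable G) : IsSupersolvable Q := by
  obtain ⟨n, c, h0, hl, hnorm, hs⟩ := h
  refine ⟨n, fun i => (c i).map π, by simp only [h0]; rw [Subgroup.map_bot],
    by simp only [hl]; rw [map_top_of_surjective _ hπ], fun i => (hnorm i).map π hπ,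
    fun i => ⟨map_mono (hs i).1, ?_⟩⟩
  obtain ⟨g, hg, hle⟩ := (hs i).2
  refine ⟨π g, ⟨g, hg, rfl⟩, ?_⟩
  have := map_mono (f := π) hle
  rwa [Subgroup.map_sup, MonoidHom.map_zpowers] at this

lemma inf_center_witness {K : Type*} [Group K] [hnil : Group.IsNilpotent K]
    {N' : Subgroup K} (hN' : N'.Normal) (hne : N' ≠ ⊥) :
    ∃ x : K, x ∈ N' ∧ x ∈ Subgroup.center K ∧ x ≠ 1 := by
  classical
  obtain ⟨n, hn⟩ := hnil.nilpotent
  have hexelt : ∀ (L : Subgroup K), L ≠ ⊥ → ∃ x ∈ L, x ≠ 1 := by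
    intro L hL
    by_contra hno
    push_neg at hno
    apply hL
    rw [eq_bot_iff]
    intro x hx
    rw [Subgroup.mem_bot]
    exact hno x hx
  set P : ℕ → Prop := fun i => N' ⊓ Subgroup.upperCentralSeries K i ≠ ⊥ with hPdef
  haveI : DecidablePred P := Classical.decPred P
  have hex : ∃ i, P i := ⟨n, by simp only [hPdef]; rw [hn, inf_top_eq]; exact hne⟩
  set i₀ := Nat.find hex with hi₀def
  have hi₀P : P i₀ := Nat.find_spec hex
  have hi₀ne : i₀ ≠ 0 := by
    intro h0'
    rw [h0'] at hi₀P
    apply hi₀P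
    rw [Subgroup.upperCentralSeries_zero, inf_bot_eq]
  obtain ⟨j, hj⟩ : ∃ j, i₀ = j + 1 := ⟨i₀ - 1, by omega⟩
  have hPj : N' ⊓ Subgroup.upperCentralSeries K j = ⊥ := by
    by_contra hc
    exact Nat.find_min hex (by omega) hc
  rw [hj] at hi₀P
  obtain ⟨x, hx, hx1⟩ := hexelt _ hi₀P
  obtain ⟨hxN, hxu⟩ := Subgroup.mem_inf.mp hx
  refine ⟨x, hxN, ?_, hx1⟩
  rw [Subgroup.mem_center_iff]
  intro y
  have hcom : x * y * x⁻¹ * y⁻¹ ∈ Subgroup.upperCentralSeries K j :=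
    Subgroup.mem_upperCentralSeries_succ_iff.mp hxu y
  have hcomN : x * y * x⁻¹ * y⁻¹ ∈ N' := by
    have h1 : y * x⁻¹ * y⁻¹ ∈ N' := by
      have := hN'.conj_mem x⁻¹ (N'.inv_mem hxN) y
      simpa [mul_assoc] using this
    have : x * (y * x⁻¹ * y⁻¹) ∈ N' := N'.mul_mem hxN h1
    simpa [mul_assoc] using this
  have : x * y * x⁻¹ * y⁻¹ ∈ N' ⊓ Subgroup.upperCentralSeries K j := ⟨hcomN, hcom⟩
  rw [hPj, Subgroup.mem_bot] at this
  have h2 : x * y * x⁻¹ = y := mul_inv_eq_one.mp this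
  have h3 : x * y = y * x := by
    have := congrArg (· * x) h2
    simpa [mul_assoc] using this
  exact h3.symm

lemma exists_minimal_normal (G : Type*) [Group G] [Finite G] [Nontrivial G] :
    ∃ N : Subgroup G, N.Normal ∧ N ≠ ⊥ ∧
      ∀ K : Subgroup G, K.Normal → K ≤ N → K ≠ ⊥ → K = N := by
  classical
  set S : ℕ → Prop := fun k => ∃ K : Subgroup G, K.Normal ∧ K ≠ ⊥ ∧ Nat.card K = k
    with hSdef
  haveI : DecidablePred S := Classical.decPred S
  have hex : ∃ k, S k :=
    ⟨Nat.card (⊤ : Subgroup G), ⊤, inferInstance, Ne.symm bot_ne_top, rfl⟩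
  obtain ⟨N, hNnorm, hNne, hNcard⟩ := Nat.find_spec hex
  refine ⟨N, hNnorm, hNne, ?_⟩
  intro K hKnorm hKle hKne
  have hcardle : Nat.card K ≤ Nat.card N := Subgroup.card_le_of_le hKle
  have hcardge : Nat.card N ≤ Nat.card K := by
    rw [hNcard]
    by_contra hlt
    exact Nat.find_min hex (by omega) ⟨K, hKnorm, hKne, rfl⟩
  have hcardKN : Nat.card (K.subgroupOf N) = Nat.card K :=
    Nat.card_congr (Subgroup.subgroupOfEquivOfLe hKle).toEquiv
  have htop : K.subgroupOf N = ⊤ := by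
    apply Subgroup.eq_top_of_le_card
    rw [hcardKN]
    omega
  exact le_antisymm hKle (Subgroup.subgroupOf_eq_top.mp htop)

lemma supersolvable_of_quotient {G : Type*} [Group G] {N : Subgroup G} [hNn : N.Normal]
    {w : G} (hw : N = zpowers w) (hQ : IsSupersolvable (G ⧸ N)) : IsSupersolvable G := by
  obtain ⟨n, c, h0, hl, hnorm, hs⟩ := hQ
  set π := QuotientGroup.mk' N with hπdef
  have hπsurj : Function.Surjective π := QuotientGroup.mk'_surjective N
  set e : Fin (n + 1 + 1) → Subgroup G :=
    Fin.cases ⊥ (fun i => comap π (c i)) with hedef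
  have he0 : e 0 = ⊥ := rfl
  have hesucc : ∀ i : Fin (n + 1), e i.succ = comap π (c i) := fun i => by
    simp only [hedef, Fin.cases_succ]
  refine ⟨n + 1, e, he0, ?_, ?_, ?_⟩
  · rw [← Fin.succ_last, hesucc, hl]
    exact Subgroup.comap_top π
  · intro i
    induction i using Fin.cases with
    | zero => rw [he0]; infer_instance
    | succ j => rw [hesucc]; exact (hnorm j).comap π
  · intro i
    induction i using Fin.cases with
    | zero =>
      have hcast : (0 : Fin (n+1)).castSucc = 0 := rfl
      have he1 : e ((0 : Fin (n+1)).succ) = N := by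
        rw [hesucc, h0]
        rw [show comap π ⊥ = π.ker from rfl]
        exact QuotientGroup.ker_mk' N
      rw [hcast, he0, he1]
      refine ⟨bot_le, w, hw ▸ mem_zpowers w, ?_⟩
      rw [bot_sup_eq]
      exact le_of_eq hw
    | succ j =>
      have hcs : (j.succ).castSucc = (j.castSucc).succ := (Fin.succ_castSucc j).symm
      rw [hcs, hesucc, hesucc]
      refine ⟨Subgroup.comap_mono (hs j).1, ?_⟩
      obtain ⟨gq, hgq, hle⟩ := (hs j).2
      obtain ⟨g, rfl⟩ := hπsurj gq
      refine ⟨g, Subgroup.mem_comap.mpr hgq, ?_⟩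
      intro x hx
      have hx' : π x ∈ c j.castSucc ⊔ zpowers (π g) := hle (Subgroup.mem_comap.mp hx)
      haveI : (c j.castSucc).Normal := hnorm _
      rw [sup_comm, ← SetLike.mem_coe, Subgroup.mul_normal] at hx'
      obtain ⟨a, ha, b, hb, hab⟩ := hx'
      obtain ⟨k, hk⟩ := mem_zpowers_iff.mp ha
      have hmemb : g ^ (-k) * x ∈ comap π (c j.castSucc) := by
        rw [Subgroup.mem_comap]
        have : π (g ^ (-k) * x) = b := by
          rw [map_mul, map_zpow]
          rw [← hab, ← hk]
          group
        rw [this]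
        exact hb
      have hxeq : x = g ^ k * (g ^ (-k) * x) := by group
      rw [hxeq]
      exact Subgroup.mul_mem _
        (Subgroup.mem_sup_right (zpow_mem (mem_zpowers g) k))
        (Subgroup.mem_sup_left hmemb)

end StmtAux
end Part5

section Part6
open Subgroup
namespace StmtAux

lemma exists_ne_one_of_ne_bot {G : Type*} [Group G] {L : Subgroup G} (hL : L ≠ ⊥) :
    ∃ x ∈ L, x ≠ 1 := by
  by_contra hno
  push_neg at hno
  apply hL
  rw [eq_bot_iff]
  intro x hx
  rw [Subgroup.mem_bot]
  exact hno x hx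

/-- Combined scalar-action lemma: every element of a subnormal supersolvable
subgroup acts on the minimal normal subgroup `N` by a power map. -/
lemma scalar_all {G : Type*} [Group G] {N H : Subgroup G} (hN : N.Normal) (hNbot : N ≠ ⊥)
    (hmin : ∀ K : Subgroup G, K.Normal → K ≤ N → K ≠ ⊥ → K = N)
    (hcent : ∀ c ∈ commutator G, ∀ v ∈ N, c * v = v * c)
    (hab : ∀ v ∈ N, ∀ w ∈ N, v * w = w * v)
    (hH : H.IsSubnormalChain) (hHs : IsSupersolvable ↥H) :
    ∀ h ∈ H, ∃ k : ℤ, ∀ v ∈ N, h * v * h⁻¹ = v ^ k := by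
  rcases eq_or_ne (N ⊓ H) ⊥ with hdisj | hne
  · obtain ⟨d, cc, hc0, hcd, hle, hnor⟩ := subnormal_nat hH
    intro h hh
    refine ⟨1, fun v hv => ?_⟩
    rw [zpow_one]
    exact centralizes_of_disjoint hN hNbot hmin hcent hab hc0 hcd hle hnor hdisj h hh v hv
  · have hnormM : ∀ h ∈ H, ∀ x ∈ N ⊓ H, h * x * h⁻¹ ∈ N ⊓ H := by
      intro h hh x hx
      exact ⟨hN.conj_mem x (Subgroup.mem_inf.mp hx).1 h,
        H.mul_mem (H.mul_mem hh (Subgroup.mem_inf.mp hx).2) (H.inv_mem hh)⟩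
    obtain ⟨v, hvM, hv1, hvk⟩ := exists_scalar_elem hHs inf_le_right hne hnormM
    intro h hh
    obtain ⟨k, hk⟩ := hvk h hh
    exact ⟨k, scalar_extend hN hmin hcent hab (Subgroup.mem_inf.mp hvM).1 hv1 hk⟩

universe u

theorem main_aux : ∀ (m : ℕ) {G : Type u} [Group G] [Finite G] (A B : Subgroup G),
    Nat.card G ≤ m → A.IsSubnormalChain → B.IsSubnormalChain → IsSupersolvable ↥A →
    IsSupersolvable ↥B → A ⊔ B = ⊤ → Group.IsNilpotent ↥(commutator G) →
    IsSupersolvable G := by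
  intro m
  induction m with
  | zero =>
    intro G _ _ A B hcard _ _ _ _ _ _
    have := Nat.card_pos (α := G)
    omega
  | succ m ih =>
    intro G _ _ A B hcard hA hB hAs hBs hgen hG'
    rcases subsingleton_or_nontrivial G with hss | hnt
    · have hbt : (⊥ : Subgroup G) = ⊤ := by
        rw [eq_top_iff']
        intro x
        rw [Subgroup.mem_bot]
        exact Subsingleton.elim x 1
      exact ⟨0, fun _ => ⊥, rfl, hbt, fun _ => inferInstance, fun i => i.elim0⟩
    · obtain ⟨N, hNnorm, hNne, hmin⟩ := exists_minimal_normal G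
      haveI := hNnorm
      haveI hCnorm : (commutator G).Normal := inferInstance
      -- dichotomy
      have hdich : N ⊓ commutator G = ⊥ ∨ N ≤ commutator G := by
        rcases eq_or_ne (N ⊓ commutator G) ⊥ with h | h
        · exact Or.inl h
        · right
          have hinfnorm : (N ⊓ commutator G).Normal :=
            ⟨fun x hx g => ⟨hNnorm.conj_mem x (Subgroup.mem_inf.mp hx).1 g,
              hCnorm.conj_mem x (Subgroup.mem_inf.mp hx).2 g⟩⟩
          have := hmin _ hinfnorm inf_le_left h
          rw [← this]
          exact inf_le_right
      -- G' centralizes N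
      have hcent : ∀ c' ∈ commutator G, ∀ v ∈ N, c' * v = v * c' := by
        rcases hdich with hbot | hle
        · intro c' hc' v hv
          have hcomm : ⁅c', v⁆ ∈ N ⊓ commutator G := by
            constructor
            · have h1 : c' * v * c'⁻¹ ∈ N := hNnorm.conj_mem v hv c'
              have : ⁅c', v⁆ = (c' * v * c'⁻¹) * v⁻¹ := by group
              rw [this]
              exact N.mul_mem h1 (N.inv_mem hv)
            · rw [_root_.commutator_def]
              exact commutator_mem_commutator (mem_top _) (mem_top _)
          rw [hbot, Subgroup.mem_bot] at hcomm
          have h2 : c' * v * c'⁻¹ = v := mul_inv_eq_one.mp hcomm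
          have := congrArg (· * c') h2
          simpa [mul_assoc] using this
        · -- N ≤ G', use the center of the nilpotent group G'
          set C := commutator G with hCdef
          set N' : Subgroup ↥C := N.subgroupOf C with hN'def
          have hN'norm : N'.Normal := hNnorm.subgroupOf C
          have hN'ne : N' ≠ ⊥ := by
            obtain ⟨x, hx, hx1⟩ := exists_ne_one_of_ne_bot hNne
            intro hbot
            have hmem : (⟨x, hle hx⟩ : ↥C) ∈ N' := by
              rw [hN'def]
              exact mem_subgroupOf.mpr hx
            rw [hbot, Subgroup.mem_bot] at hmem
            exact hx1 (congrArg Subtype.val hmem)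
          haveI := hG'
          obtain ⟨z, hzN', hzcen, hz1⟩ := inf_center_witness hN'norm hN'ne
          -- Z₀ : elements of N commuting with all of G'
          set Z₀ : Subgroup G :=
            { carrier := {t | t ∈ N ∧ ∀ y ∈ C, t * y = y * t}
              one_mem' := ⟨N.one_mem, fun y _ => by group⟩
              mul_mem' := by
                rintro a b ⟨haN, ha⟩ ⟨hbN, hb⟩
                refine ⟨N.mul_mem haN hbN, fun y hy => ?_⟩
                calc a * b * y = a * (y * b) := by rw [mul_assoc, hb y hy]
                  _ = y * (a * b) := by rw [← mul_assoc, ha y hy, mul_assoc]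
              inv_mem' := by
                rintro a ⟨haN, ha⟩
                refine ⟨N.inv_mem haN, fun y hy => ?_⟩
                have := congrArg (fun t => a⁻¹ * t * a⁻¹) (ha y hy)
                simpa [mul_assoc] using this.symm } with hZ₀def
          have hZ₀mem : ∀ t, t ∈ Z₀ ↔ t ∈ N ∧ ∀ y ∈ C, t * y = y * t := fun t => Iff.rfl
          have hZ₀norm : Z₀.Normal := by
            constructor
            intro t ht g
            rw [hZ₀mem] at ht ⊢
            obtain ⟨htN, htc⟩ := ht
            refine ⟨hNnorm.conj_mem t htN g, fun y hy => ?_⟩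
            have hy' : g⁻¹ * y * g ∈ C := by
              have := hCnorm.conj_mem y hy g⁻¹
              simpa [mul_assoc] using this
            have := htc _ hy'
            calc g * t * g⁻¹ * y = g * (t * (g⁻¹ * y * g)) * g⁻¹ := by group
              _ = g * ((g⁻¹ * y * g) * t) * g⁻¹ := by rw [this]
              _ = y * (g * t * g⁻¹) := by group
          have hZ₀ne : Z₀ ≠ ⊥ := by
            intro hbot
            apply hz1
            have hzmem : (z : G) ∈ Z₀ := by
              rw [hZ₀mem]
              refine ⟨by rw [hN'def] at hzN'; exact mem_subgroupOf.mp hzN', fun y hy => ?_⟩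
              have := (Subgroup.mem_center_iff.mp hzcen ⟨y, hy⟩)
              have h2 := congrArg Subtype.val this
              simpa using h2.symm
            rw [hbot, Subgroup.mem_bot] at hzmem
            exact Subtype.ext hzmem
          have hZ₀le : Z₀ ≤ N := fun t ht => ((hZ₀mem t).mp ht).1
          have hZ₀eq : Z₀ = N := hmin Z₀ hZ₀norm hZ₀le hZ₀ne
          intro c' hc' v hv
          rw [← hZ₀eq] at hv
          exact (((hZ₀mem v).mp hv).2 c' hc').symm
      -- N is abelian
      have hab : ∀ v ∈ N, ∀ w ∈ N, v * w = w * v := by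
        rcases hdich with hbot | hle
        · intro v hv w hw
          have hcomm : ⁅v, w⁆ ∈ N ⊓ commutator G := by
            constructor
            · exact N.mul_mem (N.mul_mem (N.mul_mem hv hw) (N.inv_mem hv)) (N.inv_mem hw)
            · rw [_root_.commutator_def]
              exact commutator_mem_commutator (mem_top _) (mem_top _)
          rw [hbot, Subgroup.mem_bot] at hcomm
          have h2 : v * w * v⁻¹ = w := mul_inv_eq_one.mp hcomm
          have := congrArg (· * v) h2
          simpa [mul_assoc] using this
        · intro v hv w hw
          exact hcent v (hle hv) w hw
      -- scalar action of A and B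
      have hscalA := scalar_all hNnorm hNne hmin hcent hab hA hAs
      have hscalB := scalar_all hNnorm hNne hmin hcent hab hB hBs
      -- N is cyclic
      obtain ⟨w, hwN, hw1⟩ := exists_ne_one_of_ne_bot hNne
      have hnormalizer : ∀ (H' : Subgroup G),
          (∀ h ∈ H', ∃ k : ℤ, ∀ v ∈ N, h * v * h⁻¹ = v ^ k) →
          H' ≤ Subgroup.normalizer ((zpowers w : Subgroup G) : Set G) := by
        intro H' hscal h hh
        rw [Subgroup.mem_normalizer_iff]
        intro x
        constructor
        · intro hx
          obtain ⟨s, hs⟩ := mem_zpowers_iff.mp hx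
          obtain ⟨k, hk⟩ := hscal h hh
          have : h * x * h⁻¹ = (w ^ k) ^ s := by
            rw [← hs, ← conj_zpow, hk w hwN]
          rw [this, ← zpow_mul]
          exact zpow_mem (mem_zpowers w) _
        · intro hx
          obtain ⟨s, hs⟩ := mem_zpowers_iff.mp hx
          obtain ⟨k, hk⟩ := hscal h⁻¹ (H'.inv_mem hh)
          have hxeq : x = h⁻¹ * w ^ s * h⁻¹⁻¹ := by rw [hs]; group
          have : x = (w ^ k) ^ s := by
            rw [hxeq, ← conj_zpow, hk w hwN]
          rw [this, ← zpow_mul]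
          exact zpow_mem (mem_zpowers w) _
      have hZnormal : (zpowers w).Normal := by
        rw [← Subgroup.normalizer_eq_top_iff, eq_top_iff, ← hgen, sup_le_iff]
        exact ⟨hnormalizer A hscalA, hnormalizer B hscalB⟩
      have hNw : N = zpowers w := by
        have := hmin (zpowers w) hZnormal (zpowers_le.mpr hwN)
          (by rw [Ne, zpowers_eq_bot]; exact hw1)
        exact this.symm
      -- quotient
      set π := QuotientGroup.mk' N with hπdef
      have hπsurj : Function.Surjective π := QuotientGroup.mk'_surjective N
      have hcardlt : Nat.card (G ⧸ N) < Nat.card G := by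
        have h1 := Subgroup.card_eq_card_quotient_mul_card_subgroup N
        have h2 : 1 < Nat.card N := (Subgroup.one_lt_card_iff_ne_bot N).mpr hNne
        have h3 : 0 < Nat.card (G ⧸ N) := Nat.card_pos
        nlinarith
      have hCQ : commutator (G ⧸ N) = Subgroup.map π (commutator G) := by
        rw [_root_.commutator_def, _root_.commutator_def, Subgroup.map_commutator,
          map_top_of_surjective _ hπsurj]
      have hnilQ : Group.IsNilpotent ↥(commutator (G ⧸ N)) := by
        rw [hCQ]
        haveI := hG'
        exact nilpotent_of_surjective (π.subgroupMap (commutator G))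
          (MonoidHom.subgroupMap_surjective π (commutator G))
      have hQ : IsSupersolvable (G ⧸ N) := by
        refine ih (A.map π) (B.map π) (by omega) (isSubnormal_map hA π hπsurj)
          (isSubnormal_map hB π hπsurj)
          (isSupersolvable_of_surjective (π.subgroupMap A)
            (MonoidHom.subgroupMap_surjective π A) hAs)
          (isSupersolvable_of_surjective (π.subgroupMap B)
            (MonoidHom.subgroupMap_surjective π B) hBs)
          (by rw [← Subgroup.map_sup, hgen, map_top_of_surjective _ hπsurj]) hnilQ
      exact supersolvable_of_quotient hNw hQ

end StmtAux
end Part6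


/-- If a finite group generated by two subnormal supersoluble subgroups has
nilpotent derived subgroup, then it is supersoluble. -/
theorem stmt_2 {G : Type*} [Group G] [Finite G] (A B : Subgroup G)
    (hA : A.IsSubnormalChain) (hB : B.IsSubnormalChain)
    (hAs : IsSupersolvable A) (hBs : IsSupersolvable B)
    (hgen : A ⊔ B = ⊤) (hG' : Group.IsNilpotent (commutator G)) :
    IsSupersolvable G := by
  exact StmtAux.main_aux (Nat.card G) A B le_rfl hA hB hAs hBs hgen hG'
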